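/- Let M and L be free abelian groups of rank n with dual bases {w_i} of M and {v_i} of L under a pairing χ: M × L → Z with χ(w_i, v_j) = δ_{ij}. Let φ: L → L and ψ: M → M be group isomorphisms given (for a fixed vertex k and nonnegative integers Q(i,j)) by ψ(w_i) = w_i for i≠k, ψ(w_k) = −w_k + Σ_j Q(k,j)·w_j, and φ(v_i) = v_i + Q(k,i)·v_k for i≠k, φ(v_k) = −v_k. Then χ(ψ(w), φ(v)) = χ(w, v) for all w ∈ M, v ∈ L. -/
import Mathlib


/-!
STATEMENT 6: The mutation transformations `ψ : M → M` and `φ : L → L`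
(`ψ(w_i) = w_i` for `i≠k`, `ψ(w_k) = -w_k + Σ_j Q(k,j) w_j`;
`φ(v_i) = v_i + Q(k,i) v_k` for `i≠k`, `φ(v_k) = -v_k`) are compatible with the
pairing `χ(w_i, v_j) = δ_{ij}`: `χ(ψ w, φ v) = χ(w, v)` for all `w, v`.
-/

theorem stmt6 {n : ℕ} (Q : Fin n → Fin n → ℕ) (k : Fin n) (hloop : Q k k = 0)
    (ψ φ : (Fin n → ℤ) →ₗ[ℤ] (Fin n → ℤ))
    (hψ : ∀ i, ψ (Pi.single i 1) =
      if i = k then (-Pi.single k 1 + ∑ j, (Q k j : ℤ) • Pi.single j 1)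
      else Pi.single i 1)
    (hφ : ∀ i, φ (Pi.single i 1) =
      if i = k then -Pi.single k 1
      else Pi.single i 1 + (Q k i : ℤ) • Pi.single k 1) :
    ∀ (w v : Fin n → ℤ), (∑ i, ψ w i * φ v i) = ∑ i, w i * v i := by
  have key : ∀ (T : (Fin n → ℤ) →ₗ[ℤ] (Fin n → ℤ)) (w : Fin n → ℤ) (j : Fin n),
      T w j = ∑ i, w i * T (Pi.single i 1) j := by
    intro T w j
    conv_lhs => rw [show w = ∑ i, w i • Pi.single i 1 by
      ext j; simp [Pi.single_apply]]
    rw [map_sum]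
    simp only [map_smul, Finset.sum_apply, Pi.smul_apply, smul_eq_mul]
  have hψc : ∀ w j, ψ w j = if j = k then -w k else w j + w k * Q k j := by
    intro w j
    rw [key ψ w j]
    have e : ∀ x : Fin n, w x * ψ (Pi.single x 1) j =
        if x = k then w k * ((Q k j : ℤ) - (if j = k then 1 else 0))
        else if j = x then w x else 0 := by
      intro x
      rw [hψ]
      rcases eq_or_ne x k with rfl | hx
      · simp only [eq_self_iff_true, if_true, ite_true, Pi.add_apply, Pi.neg_apply,
          Finset.sum_apply, Pi.smul_apply, Pi.single_apply, smul_eq_mul,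
          mul_ite, mul_one, mul_zero]
        rw [Finset.sum_ite_eq Finset.univ j]
        simp only [Finset.mem_univ, if_true]
        ring
      · simp only [hx, if_false, Pi.single_apply, mul_ite, mul_one, mul_zero]
    rw [Finset.sum_congr rfl fun x _ => e x,
      ← Finset.add_sum_erase Finset.univ _ (Finset.mem_univ k)]
    simp only [eq_self_iff_true, if_true, ite_true]
    have e2 : ∀ x ∈ Finset.univ.erase k,
        (if x = k then w k * ((Q k j : ℤ) - (if j = k then 1 else 0))
         else if j = x then w x else 0) = if j = x then w x else 0 := by
      intro x hx
      rw [Finset.mem_erase] at hx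
      simp [hx.1]
    rw [Finset.sum_congr rfl e2, Finset.sum_ite_eq (Finset.univ.erase k) j]
    rcases eq_or_ne j k with rfl | hj
    · simp [hloop]
    · simp only [hj, if_false, Finset.mem_erase, Finset.mem_univ, and_true, ne_eq, hj,
        not_false_iff, if_true]
      ring
  have hφc : ∀ v j, φ v j = if j = k then -v k + ∑ i, (Q k i : ℤ) * v i else v j := by
    intro v j
    rw [key φ v j]
    have e : ∀ x : Fin n, v x * φ (Pi.single x 1) j =
        if x = k then -(v k) * (if j = k then 1 else 0)
        else (if j = x then v x else 0) + (if j = k then v x * (Q k x : ℤ) else 0) := by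
      intro x
      rw [hφ]
      rcases eq_or_ne x k with rfl | hx
      · simp only [eq_self_iff_true, if_true, ite_true, Pi.neg_apply, Pi.single_apply]
        ring
      · simp only [hx, if_false, ite_false, Pi.add_apply, Pi.smul_apply, Pi.single_apply,
          smul_eq_mul]
        split_ifs with h1 h2 h2
        · exact absurd (h1.symm.trans h2) hx
        · ring
        · ring
        · ring
    rw [Finset.sum_congr rfl fun x _ => e x,
      ← Finset.add_sum_erase Finset.univ _ (Finset.mem_univ k)]
    simp only [eq_self_iff_true, if_true, ite_true]
    have e2 : ∀ x ∈ Finset.univ.erase k,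
        (if x = k then -(v k) * (if j = k then 1 else 0)
         else (if j = x then v x else 0) + (if j = k then v x * (Q k x : ℤ) else 0)) =
        (if j = x then v x else 0) + (if j = k then v x * (Q k x : ℤ) else 0) := by
      intro x hx
      rw [Finset.mem_erase] at hx
      simp [hx.1]
    rw [Finset.sum_congr rfl e2, Finset.sum_add_distrib,
      Finset.sum_ite_eq (Finset.univ.erase k) j]
    rcases eq_or_ne j k with rfl | hj
    · simp only [eq_self_iff_true, if_true, ite_true, Finset.mem_erase, ne_eq,
        not_true_eq_false, false_and, if_false, mul_one]
      rw [show (∑ x ∈ Finset.univ.erase j, v x * (Q j x : ℤ))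
            = ∑ x, (Q j x : ℤ) * v x by
        rw [← Finset.add_sum_erase Finset.univ (fun x => (Q j x : ℤ) * v x)
          (Finset.mem_univ j), hloop]
        simp [mul_comm]]
      ring
    · simp only [hj, if_false, ite_false, Finset.mem_erase, Finset.mem_univ, and_true, ne_eq,
        not_false_iff, if_true, Finset.sum_const_zero, mul_zero]
      ring
  intro w v
  simp only [hψc, hφc]
  rw [← Finset.add_sum_erase Finset.univ _ (Finset.mem_univ k),
    ← Finset.add_sum_erase Finset.univ (fun i => w i * v i) (Finset.mem_univ k)]
  have h1 : ∀ x ∈ Finset.univ.erase k,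
      ((if x = k then -w k else w x + w k * (Q k x : ℤ)) *
        if x = k then -v k + ∑ i, (Q k i : ℤ) * v i else v x)
      = w x * v x + w k * ((Q k x : ℤ) * v x) := by
    intro x hx
    rw [Finset.mem_erase] at hx
    simp only [hx.1, if_false]
    ring
  rw [Finset.sum_congr rfl h1, Finset.sum_add_distrib, ← Finset.mul_sum]
  have h2 : ∑ x ∈ Finset.univ.erase k, (Q k x : ℤ) * v x = ∑ i, (Q k i : ℤ) * v i := by
    rw [← Finset.add_sum_erase Finset.univ (fun x => (Q k x : ℤ) * v x) (Finset.mem_univ k),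
      hloop]
    simp
  rw [h2]
  simp only [eq_self_iff_true, if_true, ite_true]
  ring
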